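/- Let A be a connective E₁-ring and M' → M → M'' a fiber sequence of right A-module spectra. If M' and M'' are flat A-modules, then M is a flat A-module. -/

import Mathlib

open scoped TensorProduct

universe u

/-- Let `A` be a connective `E₁`-ring and `M' → M → M''` a fiber sequence
of (connective) right `A`-module spectra.  If `M'` and `M''` are flat `A`-modules, then so
is `M`.

Since Mathlib has no spectra, we encode the situation faithfully on homotopy groups:
`R = π₀(A)` is a ring (taken commutative, as Mathlib's tensor products require), the higher
homotopy `πA n = πₙ(A)` are `R`-modules, and a connective module spectrum `N` is encoded by
its homotopy groups `πN n` together with the canonical comparison maps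
`θN n : π₀(N) ⊗_R πₙ(A) → πₙ(N)`.  Flatness in the sense of Lurie (HA 7.2.2.10) says that
`π₀(N)` is flat over `R` and every `θN n` is bijective.  A fiber sequence induces the long
exact homotopy sequence `⋯ → πₙ₊₁(M'') → πₙ(M') → πₙ(M) → πₙ(M'') → ⋯` (with
`π₀(M) → π₀(M'')` surjective, as `π₋₁(M') = 0`), compatibly with the comparison maps. -/
theorem stmt_2 (R : Type u) [CommRing R]
    (πA : ℕ → Type u) [∀ n, AddCommGroup (πA n)] [∀ n, Module R (πA n)]
    (πM' πM πM'' : ℕ → Type u)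
    [∀ n, AddCommGroup (πM' n)] [∀ n, Module R (πM' n)]
    [∀ n, AddCommGroup (πM n)] [∀ n, Module R (πM n)]
    [∀ n, AddCommGroup (πM'' n)] [∀ n, Module R (πM'' n)]
    (θM' : ∀ n, (πM' 0 ⊗[R] πA n) →ₗ[R] πM' n)
    (θM : ∀ n, (πM 0 ⊗[R] πA n) →ₗ[R] πM n)
    (θM'' : ∀ n, (πM'' 0 ⊗[R] πA n) →ₗ[R] πM'' n)
    (f : ∀ n, πM' n →ₗ[R] πM n) (g : ∀ n, πM n →ₗ[R] πM'' n)
    (δ : ∀ n, πM'' (n + 1) →ₗ[R] πM' n)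
    (hfg : ∀ n, Function.Exact (f n) (g n))
    (hgδ : ∀ n, Function.Exact (g (n + 1)) (δ n))
    (hδf : ∀ n, Function.Exact (δ n) (f n))
    (hg0 : Function.Surjective (g 0))
    (hf_nat : ∀ n, (f n).comp (θM' n) = (θM n).comp (LinearMap.rTensor (πA n) (f 0)))
    (hg_nat : ∀ n, (g n).comp (θM n) = (θM'' n).comp (LinearMap.rTensor (πA n) (g 0)))
    (hM'flat : Module.Flat R (πM' 0) ∧ ∀ n, Function.Bijective (θM' n))
    (hM''flat : Module.Flat R (πM'' 0) ∧ ∀ n, Function.Bijective (θM'' n)) :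
    Module.Flat R (πM 0) ∧ ∀ n, Function.Bijective (θM n) := by
  obtain ⟨hM'0, hθ'⟩ := hM'flat
  obtain ⟨hM''0, hθ''⟩ := hM''flat
  -- Surjectivity of each θM n
  have hθsurj : ∀ n, Function.Surjective (θM n) := by
    intro n x
    obtain ⟨t'', ht''⟩ := (hθ'' n).2 (g n x)
    obtain ⟨t, rfl⟩ := LinearMap.rTensor_surjective (πA n) hg0 t''
    have hgt : g n (θM n t) = g n x := by
      have := LinearMap.congr_fun (hg_nat n) t
      simp only [LinearMap.coe_comp, Function.comp_apply] at this
      rw [this, ht'']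
    have hmem : g n (x - θM n t) = 0 := by rw [map_sub, hgt, sub_self]
    obtain ⟨y, hy⟩ := (hfg n (x - θM n t)).mp hmem
    obtain ⟨s, rfl⟩ := (hθ' n).2 y
    refine ⟨LinearMap.rTensor (πA n) (f 0) s + t, ?_⟩
    have hfs := LinearMap.congr_fun (hf_nat n) s
    simp only [LinearMap.coe_comp, Function.comp_apply] at hfs
    rw [map_add, ← hfs, hy]
    abel
  -- Surjectivity of g at every level
  have hgsurj : ∀ n, Function.Surjective (g n) := by
    intro n x
    obtain ⟨t'', ht''⟩ := (hθ'' n).2 x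
    obtain ⟨t, rfl⟩ := LinearMap.rTensor_surjective (πA n) hg0 t''
    refine ⟨θM n t, ?_⟩
    have := LinearMap.congr_fun (hg_nat n) t
    simp only [LinearMap.coe_comp, Function.comp_apply] at this
    rw [this, ht'']
  -- Hence δ = 0
  have hδ0 : ∀ n (x : πM'' (n + 1)), δ n x = 0 := by
    intro n x
    obtain ⟨y, hy⟩ := hgsurj (n + 1) x
    exact (hgδ n x).mpr ⟨y, hy⟩
  -- Hence each f n is injective
  have hfinj : ∀ n, Function.Injective (f n) := by
    intro n
    rw [injective_iff_map_eq_zero]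
    intro a ha
    obtain ⟨z, hz⟩ := (hδf n a).mp ha
    rw [← hz, hδ0]
  have hf0inj := hfinj 0
  -- Injectivity of θM n
  have hθinj : ∀ n, Function.Injective (θM n) := by
    intro n
    rw [injective_iff_map_eq_zero]
    intro t ht
    have h1 : θM'' n (LinearMap.rTensor (πA n) (g 0) t) = 0 := by
      have := LinearMap.congr_fun (hg_nat n) t
      simp only [LinearMap.coe_comp, Function.comp_apply] at this
      rw [← this, ht, map_zero]
    have h2 : LinearMap.rTensor (πA n) (g 0) t = 0 := by
      have := (hθ'' n).1
      rw [injective_iff_map_eq_zero] at this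
      exact this _ h1
    have hex : Function.Exact (LinearMap.rTensor (πA n) (f 0))
        (LinearMap.rTensor (πA n) (g 0)) :=
      rTensor_exact (πA n) (hfg 0) hg0
    obtain ⟨s, rfl⟩ := (hex t).mp h2
    have hfs := LinearMap.congr_fun (hf_nat n) s
    simp only [LinearMap.coe_comp, Function.comp_apply] at hfs
    rw [← hfs] at ht
    have hs0 : θM' n s = 0 :=
      hfinj n (show f n (θM' n s) = f n 0 by rw [ht, map_zero])
    have : s = 0 := by
      have := (hθ' n).1
      rw [injective_iff_map_eq_zero] at this
      exact this _ hs0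
    rw [this, map_zero]
  -- Flatness of πM 0 from the short exact sequence with flat ends
  have hflat : Module.Flat R (πM 0) := by
    rw [Module.Flat.iff_rTensor_injective']
    intro I
    rw [injective_iff_map_eq_zero]
    intro x hx
    -- push x to I ⊗ πM'' 0
    have hx'' : LinearMap.rTensor (πM'' 0) I.subtype
        (LinearMap.lTensor I (g 0) x) = 0 := by
      have hcomm : (LinearMap.rTensor (πM'' 0) I.subtype).comp
            (LinearMap.lTensor (↥I) (g 0))
          = (LinearMap.lTensor R (g 0)).comp
            (LinearMap.rTensor (πM 0) I.subtype) := by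
        rw [LinearMap.rTensor_comp_lTensor, LinearMap.lTensor_comp_rTensor]
      have := LinearMap.congr_fun hcomm x
      simp only [LinearMap.coe_comp, Function.comp_apply] at this
      rw [this, hx, map_zero]
    have h2 : LinearMap.lTensor I (g 0) x = 0 := by
      have hinj := (Module.Flat.iff_rTensor_injective').mp hM''0 I
      rw [injective_iff_map_eq_zero] at hinj
      exact hinj _ hx''
    have hex : Function.Exact (LinearMap.lTensor I (f 0)) (LinearMap.lTensor I (g 0)) :=
      lTensor_exact (↥I) (hfg 0) hg0
    obtain ⟨y, rfl⟩ := (hex x).mp h2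
    have hy0 : LinearMap.lTensor R (f 0) (LinearMap.rTensor (πM' 0) I.subtype y) = 0 := by
      have hcomm : (LinearMap.rTensor (πM 0) I.subtype).comp
            (LinearMap.lTensor (↥I) (f 0))
          = (LinearMap.lTensor R (f 0)).comp
            (LinearMap.rTensor (πM' 0) I.subtype) := by
        rw [LinearMap.rTensor_comp_lTensor, LinearMap.lTensor_comp_rTensor]
      have := LinearMap.congr_fun hcomm y
      simp only [LinearMap.coe_comp, Function.comp_apply] at this
      rw [← this, hx]
    have hfR : Function.Injective (LinearMap.lTensor R (f 0)) :=
      Module.Flat.lTensor_preserves_injective_linearMap (f 0) hf0inj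
    have hy1 : LinearMap.rTensor (πM' 0) I.subtype y = 0 := by
      rw [injective_iff_map_eq_zero] at hfR
      exact hfR _ hy0
    have hinj' := (Module.Flat.iff_rTensor_injective').mp hM'0 I
    rw [injective_iff_map_eq_zero] at hinj'
    rw [hinj' _ hy1, map_zero]
  exact ⟨hflat, fun n => ⟨hθinj n, hθsurj n⟩⟩
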